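/- arXiv:2307.14300 — 4 statements merged into one kernel-verified Lean document; each statement's English description precedes it below -/
import Mathlib

section
/- Let q = p^m and let C be an [n, k] linear code over F_p. There exists a tuple D = (d_1, ..., d_n) ∈ F_q^n such that C = C_D := { (Tr_{q/p}(x·d_i))_{i=1..n} : x ∈ F_q } if and only if m ≥ k. -/
open scoped BigOperators

/-- An `[n,k]` linear code `C` over `𝔽_p` is realizable as a second
generic construction code `C_D` with defining tuple `D ∈ 𝔽_q^n`, `q = p^m`, iff `m ≥ k`. -/
theorem second_generic_construction_realizable_iff
    (p m n k : ℕ) [Fact p.Prime] (hm : 0 < m)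
    (C : Submodule (ZMod p) (Fin n → ZMod p))
    (hk : Module.finrank (ZMod p) C = k) :
    (∃ d : Fin n → GaloisField p m,
        (C : Set (Fin n → ZMod p)) =
          {v | ∃ x : GaloisField p m,
              v = fun i => Algebra.trace (ZMod p) (GaloisField p m) (x * d i)}) ↔
      k ≤ m := by
  set F := GaloisField p m with hFdef
  have hF : Module.finrank (ZMod p) F = m := GaloisField.finrank p hm.ne'
  constructor
  · rintro ⟨d, hd⟩
    let φ : F →ₗ[ZMod p] (Fin n → ZMod p) :=
      LinearMap.pi fun i => (Algebra.traceForm (ZMod p) F).flip (d i)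
    have hCr : C = LinearMap.range φ := by
      apply Submodule.ext
      intro v
      rw [← SetLike.mem_coe, hd]
      constructor
      · rintro ⟨x, rfl⟩
        exact ⟨x, rfl⟩
      · rintro ⟨x, rfl⟩
        exact ⟨x, rfl⟩
    calc k = Module.finrank (ZMod p) C := hk.symm
      _ = Module.finrank (ZMod p) (LinearMap.range φ) := by rw [hCr]
      _ ≤ Module.finrank (ZMod p) F := LinearMap.finrank_range_le φ
      _ = m := hF
  · intro hkm
    let bC : Module.Basis (Fin k) (ZMod p) C :=
      (Module.finBasis (ZMod p) C).reindex (finCongr hk)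
    let bF : Module.Basis (Fin m) (ZMod p) F :=
      (Module.finBasis (ZMod p) F).reindex (finCongr hF)
    let L : F →ₗ[ZMod p] C :=
      bF.constr (ZMod p) (fun i => if h : (i : ℕ) < k then bC ⟨i, h⟩ else 0)
    have hLsurj : Function.Surjective L := by
      rw [← LinearMap.range_eq_top, eq_top_iff, ← bC.span_eq, Submodule.span_le]
      rintro _ ⟨j, rfl⟩
      refine ⟨bF (Fin.castLE hkm j), ?_⟩
      rw [Module.Basis.constr_basis]
      have : ((Fin.castLE hkm j : Fin m) : ℕ) < k := j.isLt
      rw [dif_pos this]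
      congr 1
    let ψ : F →ₗ[ZMod p] (Fin n → ZMod p) := C.subtype ∘ₗ L
    have hψrange : LinearMap.range ψ = C := by
      rw [LinearMap.range_comp, LinearMap.range_eq_top.mpr hLsurj, Submodule.map_top,
        Submodule.range_subtype]
    let e := (Algebra.traceForm (ZMod p) F).toDual (traceForm_nondegenerate (ZMod p) F)
    refine ⟨fun i => e.symm ((LinearMap.proj i) ∘ₗ ψ), ?_⟩
    have key : ∀ (x : F) (i : Fin n),
        Algebra.trace (ZMod p) F (x * e.symm ((LinearMap.proj i) ∘ₗ ψ)) = ψ x i := by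
      intro x i
      calc Algebra.trace (ZMod p) F (x * e.symm ((LinearMap.proj i) ∘ₗ ψ))
          = Algebra.traceForm (ZMod p) F (e.symm ((LinearMap.proj i) ∘ₗ ψ)) x := by
            rw [Algebra.traceForm_apply, mul_comm]
        _ = ((LinearMap.proj i) ∘ₗ ψ) x :=
            LinearMap.BilinForm.apply_toDual_symm_apply _ _
        _ = ψ x i := rfl
    ext v
    constructor
    · intro hv
      have : v ∈ LinearMap.range ψ := hψrange ▸ hv
      obtain ⟨x, rfl⟩ := this
      exact ⟨x, by funext i; rw [key]⟩
    · rintro ⟨x, rfl⟩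
      have : ψ x ∈ C := hψrange ▸ LinearMap.mem_range_self ψ x
      rw [SetLike.mem_coe]
      convert this using 1
      funext i; rw [key]
end

section
/- Let q = p^m and D = {d_1, ..., d_n} ⊆ F_q with code C_D. Define the F_p-linear map φ : C_D → F_q by φ(c_x) = ∑_{i=1}^n Tr_{q/p}(x·d_i)·d_i, where c_x = (Tr(x·d_1),...,Tr(x·d_n)). Then Hull(C_D) = ker(φ), and consequently dim Hull(C_D) = dim C_D − rank(φ). -/
open scoped BigOperators

def dualSub {K : Type*} [Field K] {n : ℕ} (C : Submodule K (Fin n → K)) :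
    Submodule K (Fin n → K) where
  carrier := {v | ∀ c ∈ C, ∑ i, v i * c i = 0}
  add_mem' := by
    intro a b ha hb c hc
    simp only [Set.mem_setOf_eq, Pi.add_apply] at *
    simp [add_mul, Finset.sum_add_distrib, ha c hc, hb c hc]
  zero_mem' := by intro c hc; simp
  smul_mem' := by
    intro r a ha c hc
    simp only [Set.mem_setOf_eq, Pi.smul_apply, smul_eq_mul] at *
    simp [mul_assoc, ← Finset.mul_sum, ha c hc]

noncomputable def traceCodeMap (p m n : ℕ) [Fact p.Prime] (d : Fin n → GaloisField p m) :
    GaloisField p m →ₗ[ZMod p] (Fin n → ZMod p) :=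
  LinearMap.pi fun i =>
    (Algebra.trace (ZMod p) (GaloisField p m)).comp (LinearMap.mulRight (ZMod p) (d i))

/-- The `𝔽_p`-linear map `x ↦ ∑ᵢ Tr(x·dᵢ)·dᵢ`, whose value on `x` only depends on the
codeword `c_x`, so that it induces the map `φ : C_D → 𝔽_q` of the statement. -/
noncomputable def hullMap (p m n : ℕ) [Fact p.Prime] (d : Fin n → GaloisField p m) :
    GaloisField p m →ₗ[ZMod p] GaloisField p m where
  toFun x := ∑ i, Algebra.trace (ZMod p) (GaloisField p m) (x * d i) • d i
  map_add' x y := by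
    simp [add_mul, map_add, add_smul, Finset.sum_add_distrib]
  map_smul' r x := by
    simp only [smul_mul_assoc, map_smul, RingHom.id_apply, Finset.smul_sum, smul_smul,
      smul_eq_mul]


section Aux

variable (p m n : ℕ) [Fact p.Prime] (d : Fin n → GaloisField p m)

lemma traceCodeMap_apply (x : GaloisField p m) (i : Fin n) :
    traceCodeMap p m n d x i = Algebra.trace (ZMod p) (GaloisField p m) (x * d i) := rfl

lemma key_iff (hm : 0 < m) (x : GaloisField p m) :
    traceCodeMap p m n d x ∈ dualSub (LinearMap.range (traceCodeMap p m n d)) ↔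
      hullMap p m n d x = 0 := by
  haveI : Fact (m ≠ 0) := ⟨hm.ne'⟩
  have hnd := traceForm_nondegenerate (ZMod p) (GaloisField p m)
  have hTr : ∀ y : GaloisField p m,
      Algebra.trace (ZMod p) (GaloisField p m) (hullMap p m n d x * y) =
        ∑ i, traceCodeMap p m n d x i * traceCodeMap p m n d y i := by
    intro y
    simp only [hullMap, LinearMap.coe_mk, AddHom.coe_mk, Finset.sum_mul, smul_mul_assoc,
      map_sum, map_smul, traceCodeMap_apply, smul_eq_mul]
    refine Finset.sum_congr rfl fun i _ => ?_
    rw [mul_comm (d i) y]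
  constructor
  · intro h
    refine hnd.1 _ fun y => ?_
    have := h (traceCodeMap p m n d y) ⟨y, rfl⟩
    rw [Algebra.traceForm_apply, hTr y, this]
  · intro h c hc
    obtain ⟨y, rfl⟩ := hc
    rw [← hTr y, h, zero_mul, map_zero]

lemma hull_eq_map (hm : 0 < m) :
    (LinearMap.range (traceCodeMap p m n d) ⊓
        dualSub (LinearMap.range (traceCodeMap p m n d))) =
      Submodule.map (traceCodeMap p m n d) (LinearMap.ker (hullMap p m n d)) := by
  ext v
  constructor
  · rintro ⟨⟨x, rfl⟩, hv⟩
    exact ⟨x, (key_iff p m n d hm x).mp hv, rfl⟩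
  · rintro ⟨x, hx, rfl⟩
    exact ⟨⟨x, rfl⟩, (key_iff p m n d hm x).mpr hx⟩

end Aux

/-- `Hull(C_D) = ker φ` where `φ(c_x) = ∑ᵢ Tr(x·dᵢ)·dᵢ`, and consequently
`dim Hull(C_D) = dim C_D − rank φ`. -/
theorem hull_eq_ker_and_dim
    (p m n : ℕ) [Fact p.Prime] (hm : 0 < m)
    (d : Fin n → GaloisField p m) :
    (∀ x : GaloisField p m,
      (traceCodeMap p m n d x ∈
          LinearMap.range (traceCodeMap p m n d) ⊓
            dualSub (LinearMap.range (traceCodeMap p m n d)) ↔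
        hullMap p m n d x = 0)) ∧
    Module.finrank (ZMod p)
        (LinearMap.range (traceCodeMap p m n d) ⊓
          dualSub (LinearMap.range (traceCodeMap p m n d)) :
          Submodule (ZMod p) (Fin n → ZMod p)) =
      Module.finrank (ZMod p) (LinearMap.range (traceCodeMap p m n d)) -
        Module.finrank (ZMod p) (LinearMap.range (hullMap p m n d)) := by
  haveI : Fact (m ≠ 0) := ⟨hm.ne'⟩
  set T := traceCodeMap p m n d with hT
  set H := hullMap p m n d with hH
  have hker : LinearMap.ker T ≤ LinearMap.ker H := by
    intro x hx
    have hx' : ∀ i, Algebra.trace (ZMod p) (GaloisField p m) (x * d i) = 0 := by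
      intro i
      have := congrFun (LinearMap.mem_ker.mp hx) i
      simpa [T, traceCodeMap_apply] using this
    simp [H, hullMap, LinearMap.mem_ker, hx']
  constructor
  · intro x
    constructor
    · intro h; exact (key_iff p m n d hm x).mp h.2
    · intro h; exact ⟨⟨x, rfl⟩, (key_iff p m n d hm x).mpr h⟩
  · rw [hull_eq_map p m n d hm, ← hT, ← hH]
    have h1 := LinearMap.finrank_range_add_finrank_ker (T.domRestrict (LinearMap.ker H))
    have hrange : LinearMap.range (T.domRestrict (LinearMap.ker H)) =
        Submodule.map T (LinearMap.ker H) := by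
      ext v; simp [LinearMap.mem_range, Submodule.mem_map]
    have hkerres : LinearMap.ker (T.domRestrict (LinearMap.ker H)) =
        Submodule.comap (LinearMap.ker H).subtype (LinearMap.ker T) := by
      ext v; simp [LinearMap.mem_ker]
    have hkereq : Module.finrank (ZMod p)
        (LinearMap.ker (T.domRestrict (LinearMap.ker H))) =
        Module.finrank (ZMod p) (LinearMap.ker T) := by
      rw [hkerres]
      refine LinearEquiv.finrank_eq ?_
      exact Submodule.comapSubtypeEquivOfLe hker
    rw [hrange, hkereq] at h1
    have h2 := LinearMap.finrank_range_add_finrank_ker T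
    have h3 := LinearMap.finrank_range_add_finrank_ker H
    omega
end

section
/- In the setting of the fixed-Hull-dimension construction (D = (d_1,...,d_k, α d_1,...,α d_l, β d_{l+1},...,β d_k) with d_i linearly independent over F_p, α²=−1, β²≠−1), a codeword c_x lies in Hull(C_D) if and only if Tr_{q/p}(x·d_i) = 0 for all i = l+1, ..., k. -/
open scoped BigOperators

def dualSet {K : Type*} [Field K] {n : ℕ} (C : Set (Fin n → K)) : Set (Fin n → K) :=
  {v | ∀ c ∈ C, ∑ i, v i * c i = 0}

def traceCodeSet (p m n : ℕ) [Fact p.Prime] (d : Fin n → GaloisField p m) :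
    Set (Fin n → ZMod p) :=
  {v | ∃ x : GaloisField p m,
      v = fun i => Algebra.trace (ZMod p) (GaloisField p m) (x * d i)}

/-- The defining tuple `D = (d₁,…,d_k, α d₁,…,α d_l, β d_{l+1},…,β d_k)`. -/
noncomputable def fixedHullTuple (p m k l : ℕ) [Fact p.Prime]
    (d : Fin k → GaloisField p m) (α β : ZMod p) : Fin (k + k) → GaloisField p m :=
  Fin.append d fun j =>
    if (j : ℕ) < l then algebraMap (ZMod p) (GaloisField p m) α * d j
    else algebraMap (ZMod p) (GaloisField p m) β * d j

/-- In the fixed-Hull-dimension construction, the codeword `c_x` lies in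
`Hull(C_D)` iff `Tr(x·dᵢ) = 0` for all `i = l+1,…,k`. -/
theorem fixedHull_membership
    (p m k l : ℕ) [Fact p.Prime] (hm : 0 < m) (hp : Odd p) (hl : l ≤ k)
    (α β : ZMod p) (hα : α ^ 2 = -1) (hβ : β ^ 2 ≠ -1)
    (d : Fin k → GaloisField p m) (hli : LinearIndependent (ZMod p) d)
    (x : GaloisField p m) :
    ((fun i => Algebra.trace (ZMod p) (GaloisField p m) (x * fixedHullTuple p m k l d α β i)) ∈
        traceCodeSet p m (k + k) (fixedHullTuple p m k l d α β) ∩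
          dualSet (traceCodeSet p m (k + k) (fixedHullTuple p m k l d α β))) ↔
      ∀ i : Fin k, l ≤ (i : ℕ) →
        Algebra.trace (ZMod p) (GaloisField p m) (x * d i) = 0 := by
  set T := Algebra.trace (ZMod p) (GaloisField p m) with hTdef
  set D := fixedHullTuple p m k l d α β with hDdef
  -- the key sum
  set S : GaloisField p m := ∑ i, T (x * D i) • D i with hSdef
  have key : ∀ y : GaloisField p m,
      ∑ i, T (x * D i) * T (y * D i) = T (S * y) := by
    intro y
    rw [hSdef, Finset.sum_mul, map_sum]
    refine Finset.sum_congr rfl fun i _ => ?_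
    rw [smul_mul_assoc, map_smul, smul_eq_mul, mul_comm (D i) y]
  -- compute S
  have hS : S = ∑ j : Fin k,
      (((1 : ZMod p) + (if (j : ℕ) < l then α ^ 2 else β ^ 2)) * T (x * d j)) • d j := by
    rw [hSdef, hDdef]
    unfold fixedHullTuple
    rw [Fin.sum_univ_add]
    simp only [Fin.append_left, Fin.append_right]
    rw [← Finset.sum_add_distrib]
    refine Finset.sum_congr rfl fun j _ => ?_
    split_ifs with hj
    · rw [← Algebra.smul_def, mul_smul_comm, map_smul, smul_eq_mul, smul_smul]
      rw [← add_smul]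
      congr 1
      ring
    · rw [← Algebra.smul_def, mul_smul_comm, map_smul, smul_eq_mul, smul_smul]
      rw [← add_smul]
      congr 1
      ring
  have hα' : (1 : ZMod p) + α ^ 2 = 0 := by rw [hα]; ring
  have hβ' : (1 : ZMod p) + β ^ 2 ≠ 0 := fun h => hβ (by linear_combination h)
  constructor
  · rintro ⟨-, hdual⟩ i hi
    have hzero : ∀ y : GaloisField p m, T (S * y) = 0 := by
      intro y
      rw [← key]
      exact hdual _ ⟨y, rfl⟩
    have hS0 : S = 0 := (traceForm_nondegenerate (ZMod p) (GaloisField p m)).1 S hzero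
    rw [hS] at hS0
    have := Fintype.linearIndependent_iff.mp hli _ hS0 i
    rw [if_neg (not_lt.mpr hi)] at this
    rcases mul_eq_zero.mp this with h | h
    · exact absurd h hβ'
    · exact h
  · intro h
    refine ⟨⟨x, rfl⟩, ?_⟩
    rintro c ⟨y, rfl⟩
    rw [key]
    have hS0 : S = 0 := by
      rw [hS]
      refine Finset.sum_eq_zero fun j _ => ?_
      split_ifs with hj
      · rw [hα', zero_mul, zero_smul]
      · rw [h j (not_lt.mp hj), mul_zero, zero_smul]
    rw [hS0, zero_mul, map_zero]
end

section
/- Let q = 2^a and r = q^b. Let k be even and d_1, ..., d_k ∈ F_r be linearly independent over F_q. Let D = (d_1, ..., d_k, d_1+d_2, d_3+d_4, ..., d_{k-1}+d_k). Then C_D = { (Tr_{r/q}(x·d))_{d∈D} : x ∈ F_r } is an LCD code (i.e., Hull(C_D) = {0}) of length 3k/2 and dimension k over F_q. -/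
open scoped BigOperators

/-- The code `C_D ⊆ 𝔽_q^n` from a defining tuple `D ∈ 𝔽_r^n`, via the relative trace. -/
noncomputable def relTraceCodeMap (K L : Type*) [Field K] [Field L] [Algebra K L]
    [FiniteDimensional K L] {n : ℕ} (e : Fin n → L) : L →ₗ[K] (Fin n → K) :=
  LinearMap.pi fun i => (Algebra.trace K L).comp (LinearMap.mulRight K (e i))

/-- The defining tuple `D = (d₁,…,d_k, d₁+d₂, d₃+d₄, …, d_{k−1}+d_k)` with `k = 2s`. -/
def lcdTuple {L : Type*} [Field L] (s : ℕ) (d : Fin (2 * s) → L) :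
    Fin (2 * s + s) → L :=
  Fin.append d fun j =>
    d ⟨2 * (j : ℕ), by have := j.isLt; omega⟩ + d ⟨2 * (j : ℕ) + 1, by have := j.isLt; omega⟩


set_option linter.unusedSectionVars false

private lemma sum_pair_range {M : Type*} [AddCommMonoid M] (s : ℕ) (h : ℕ → M) :
    ∑ i ∈ Finset.range (2 * s), h i
      = ∑ j ∈ Finset.range s, (h (2 * j) + h (2 * j + 1)) := by
  induction s with
  | zero => simp
  | succ n ih =>
    have h2 : 2 * (n + 1) = (2 * n) + 1 + 1 := by ring
    rw [h2, Finset.sum_range_succ, Finset.sum_range_succ, ih, Finset.sum_range_succ]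
    abel

private lemma fin_sum_pair {M : Type*} [AddCommMonoid M] (s : ℕ) (f : Fin (2 * s) → M) :
    ∑ i, f i = ∑ j : Fin s,
      (f ⟨2 * (j : ℕ), by have := j.isLt; omega⟩
        + f ⟨2 * (j : ℕ) + 1, by have := j.isLt; omega⟩) := by
  classical
  set F : ℕ → M := fun i => if h : i < 2 * s then f ⟨i, h⟩ else 0 with hF
  have h1 : ∑ i, f i = ∑ i ∈ Finset.range (2 * s), F i := by
    rw [← Fin.sum_univ_eq_sum_range]
    exact Finset.sum_congr rfl fun i _ => by simp [hF, i.isLt]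
  have h2 : ∑ j : Fin s, (f ⟨2 * (j : ℕ), by have := j.isLt; omega⟩
        + f ⟨2 * (j : ℕ) + 1, by have := j.isLt; omega⟩)
      = ∑ j ∈ Finset.range s, (F (2 * j) + F (2 * j + 1)) := by
    rw [← Fin.sum_univ_eq_sum_range (fun j => F (2 * j) + F (2 * j + 1)) s]
    refine Finset.sum_congr rfl fun j _ => ?_
    have hj := j.isLt
    have p1 : 2 * (j : ℕ) < 2 * s := by omega
    have p2 : 2 * (j : ℕ) + 1 < 2 * s := by omega
    simp [hF, p1, p2]
  rw [h1, h2, sum_pair_range]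

section TraceAux
variable (K L : Type*) [Field K] [Fintype K] [Field L] [Fintype L] [Algebra K L]
  [FiniteDimensional K L]

private lemma relTraceCodeMap_apply {n : ℕ} (e : Fin n → L) (x : L) (i : Fin n) :
    relTraceCodeMap K L e x i = Algebra.trace K L (x * e i) := rfl

private lemma trace_mul_sum {n : ℕ} (c : Fin n → K) (e : Fin n → L) (x : L) :
    ∑ i, c i * Algebra.trace K L (x * e i) = Algebra.trace K L (x * ∑ i, c i • e i) := by
  rw [Finset.mul_sum, map_sum]
  refine Finset.sum_congr rfl fun i _ => ?_
  rw [mul_smul_comm, map_smul, smul_eq_mul]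

private lemma trace_eq_zero_of (z : L) (h : ∀ x : L, Algebra.trace K L (x * z) = 0) :
    z = 0 := by
  refine (traceForm_nondegenerate K L).1 z fun y => ?_
  rw [Algebra.traceForm_apply, mul_comm]
  exact h y

private lemma head_surj {n : ℕ} (d : Fin n → L) (hli : LinearIndependent K d) :
    Function.Surjective (relTraceCodeMap K L d) := by
  classical
  rw [← LinearMap.dualMap_injective_iff, injective_iff_map_eq_zero]
  intro φ hφ
  set c : Fin n → K := fun i => φ (fun j => if i = j then 1 else 0) with hc
  have hz : (∑ i, c i • d i) = 0 := by
    apply trace_eq_zero_of K L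
    intro x
    rw [← trace_mul_sum K L c d x]
    have h1 : φ (relTraceCodeMap K L d x) = 0 := by
      have := LinearMap.congr_fun hφ x
      simpa [LinearMap.dualMap_apply] using this
    rw [LinearMap.pi_apply_eq_sum_univ φ] at h1
    calc ∑ i, c i * Algebra.trace K L (x * d i)
        = ∑ i, (relTraceCodeMap K L d x) i • c i := by
          refine Finset.sum_congr rfl fun i _ => ?_
          rw [relTraceCodeMap_apply, smul_eq_mul, mul_comm]
      _ = 0 := h1
  have hc0 := Fintype.linearIndependent_iff.mp hli c hz
  refine LinearMap.ext fun v => ?_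
  rw [LinearMap.pi_apply_eq_sum_univ φ v, LinearMap.zero_apply]
  exact Finset.sum_eq_zero fun i _ => by
    rw [show φ (fun j => if i = j then 1 else 0) = c i from rfl, hc0 i, smul_zero]
end TraceAux

set_option maxHeartbeats 2000000 in
/-- In characteristic 2, with `d₁,…,d_k ∈ 𝔽_r` (`k = 2s` even) linearly
independent over `𝔽_q` and `D = (d₁,…,d_k, d₁+d₂, …, d_{k−1}+d_k)`, the code `C_D` is an
LCD code of length `3k/2` and dimension `k` over `𝔽_q`. -/
theorem lcd_construction_char_two
    (K L : Type*) [Field K] [Fintype K] [Field L] [Fintype L] [Algebra K L]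
    [FiniteDimensional K L] [CharP K 2]
    (s : ℕ) (d : Fin (2 * s) → L) (hli : LinearIndependent K d) :
    LinearMap.range (relTraceCodeMap K L (lcdTuple s d)) ⊓
        dualSub (LinearMap.range (relTraceCodeMap K L (lcdTuple s d))) = ⊥ ∧
    Module.finrank K (LinearMap.range (relTraceCodeMap K L (lcdTuple s d))) = 2 * s := by
  classical
  set e := lcdTuple s d with he
  set F := relTraceCodeMap K L e with hF
  have hFx : ∀ (x : L) (i : Fin (2 * s + s)), F x i = Algebra.trace K L (x * e i) :=
    fun _ _ => rfl
  have he1 : ∀ i : Fin (2 * s), e (Fin.castAdd s i) = d i :=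
    fun i => Fin.append_left _ _ i
  have he2 : ∀ j : Fin s, e (Fin.natAdd (2 * s) j)
      = d ⟨2 * (j : ℕ), by have := j.isLt; omega⟩
        + d ⟨2 * (j : ℕ) + 1, by have := j.isLt; omega⟩ :=
    fun j => Fin.append_right _ _ j
  -- if all traces against the dᵢ vanish, the codeword is zero
  have hd2 : ∀ x : L, (∀ i : Fin (2 * s), Algebra.trace K L (x * d i) = 0) → F x = 0 := by
    intro x hx
    funext i
    refine Fin.addCases (fun i => ?_) (fun j => ?_) i
    · rw [hFx, he1, hx, Pi.zero_apply]
    · rw [hFx, he2, mul_add, map_add, hx, hx, add_zero, Pi.zero_apply]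
  -- dimension part
  have hsurj := head_surj K L d hli
  have hker : LinearMap.ker F = LinearMap.ker (relTraceCodeMap K L d) := by
    ext x
    simp only [LinearMap.mem_ker]
    constructor
    · intro h
      funext i
      have := congrFun h (Fin.castAdd s i)
      rw [hFx, he1, Pi.zero_apply] at this
      rw [relTraceCodeMap_apply, this, Pi.zero_apply]
    · intro h
      refine hd2 x fun i => ?_
      have := congrFun h i
      rw [relTraceCodeMap_apply] at this
      simpa using this
  have r1 := LinearMap.finrank_range_add_finrank_ker F
  have r2 := LinearMap.finrank_range_add_finrank_ker (relTraceCodeMap K L d)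
  have hrtop : LinearMap.range (relTraceCodeMap K L d) = ⊤ :=
    LinearMap.range_eq_top.mpr hsurj
  have hr2s : Module.finrank K (LinearMap.range (relTraceCodeMap K L d)) = 2 * s := by
    rw [hrtop, finrank_top, Module.finrank_pi, Fintype.card_fin]
  have hdim : Module.finrank K (LinearMap.range F) = 2 * s := by
    rw [← hker, hr2s] at r2
    omega
  refine ⟨?_, hdim⟩
  -- hull part
  rw [eq_bot_iff]
  intro v hv
  obtain ⟨hvr, hvd⟩ := Submodule.mem_inf.mp hv
  obtain ⟨x, rfl⟩ := hvr
  have hdual : ∀ y : L, ∑ i, (F x) i * (F y) i = 0 := fun y => hvd (F y) ⟨y, rfl⟩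
  have hz : (∑ i, (F x) i • e i) = 0 := by
    apply trace_eq_zero_of K L
    intro y
    rw [← trace_mul_sum K L (F x) e y]
    exact hdual y
  rw [Fin.sum_univ_add] at hz
  set a : Fin (2 * s) → K := fun i => Algebra.trace K L (x * d i) with ha
  have hca : ∀ i : Fin (2 * s), F x (Fin.castAdd s i) = a i := by
    intro i; rw [hFx, he1]
  have hcb : ∀ j : Fin s, F x (Fin.natAdd (2 * s) j)
      = a ⟨2 * (j : ℕ), by have := j.isLt; omega⟩
        + a ⟨2 * (j : ℕ) + 1, by have := j.isLt; omega⟩ := by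
    intro j; rw [hFx, he2, mul_add, map_add]
  simp only [hca, hcb, he1, he2] at hz
  -- hz : ∑ i, a i • d i + ∑ j, (a ⟨2j⟩ + a ⟨2j+1⟩) • (d ⟨2j⟩ + d ⟨2j+1⟩) = 0
  set g : Fin (2 * s) → K := fun i =>
    a i + (a ⟨2 * ((i : ℕ) / 2), by have := i.isLt; omega⟩
      + a ⟨2 * ((i : ℕ) / 2) + 1, by have := i.isLt; omega⟩) with hg
  have hgz : ∑ i, g i • d i = 0 := by
    have step1 : ∑ i, g i • d i
        = ∑ i, a i • d i
          + ∑ i : Fin (2 * s), (a ⟨2 * ((i : ℕ) / 2), by have := i.isLt; omega⟩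
              + a ⟨2 * ((i : ℕ) / 2) + 1, by have := i.isLt; omega⟩) • d i := by
      rw [← Finset.sum_add_distrib]
      refine Finset.sum_congr rfl fun i _ => ?_
      rw [hg, add_smul]
    have step2 : ∑ i : Fin (2 * s), (a ⟨2 * ((i : ℕ) / 2), by have := i.isLt; omega⟩
              + a ⟨2 * ((i : ℕ) / 2) + 1, by have := i.isLt; omega⟩) • d i
        = ∑ j : Fin s, (a ⟨2 * (j : ℕ), by have := j.isLt; omega⟩
            + a ⟨2 * (j : ℕ) + 1, by have := j.isLt; omega⟩)
            • (d ⟨2 * (j : ℕ), by have := j.isLt; omega⟩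
              + d ⟨2 * (j : ℕ) + 1, by have := j.isLt; omega⟩) := by
      rw [fin_sum_pair s (fun i => (a ⟨2 * ((i : ℕ) / 2), by have := i.isLt; omega⟩
              + a ⟨2 * ((i : ℕ) / 2) + 1, by have := i.isLt; omega⟩) • d i)]
      refine Finset.sum_congr rfl fun j _ => ?_
      have hj := j.isLt
      have h1 : (2 * (j : ℕ)) / 2 = (j : ℕ) := by omega
      have h2 : (2 * (j : ℕ) + 1) / 2 = (j : ℕ) := by omega
      simp only [Fin.val_mk, h1, h2, smul_add]
    rw [step1, step2]
    exact hz
  have hg0 := Fintype.linearIndependent_iff.mp hli g hgz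
  have haz : ∀ i : Fin (2 * s), a i = 0 := by
    have key : ∀ j : Fin s,
        a ⟨2 * (j : ℕ), by have := j.isLt; omega⟩ = 0 ∧
        a ⟨2 * (j : ℕ) + 1, by have := j.isLt; omega⟩ = 0 := by
      intro j
      have hj := j.isLt
      have h1 : (2 * (j : ℕ)) / 2 = (j : ℕ) := by omega
      have h2 : (2 * (j : ℕ) + 1) / 2 = (j : ℕ) := by omega
      have e1 := hg0 ⟨2 * (j : ℕ), by omega⟩
      have e2 := hg0 ⟨2 * (j : ℕ) + 1, by omega⟩
      rw [hg] at e1 e2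
      simp only [Fin.val_mk, h1, h2] at e1 e2
      -- e1 : a ⟨2j⟩ + (a ⟨2j⟩ + a ⟨2j+1⟩) = 0 ; e2 : a ⟨2j+1⟩ + (a ⟨2j⟩ + a ⟨2j+1⟩) = 0
      constructor
      · have : a ⟨2 * (j : ℕ) + 1, by omega⟩ + (a ⟨2 * (j : ℕ), by omega⟩
            + a ⟨2 * (j : ℕ) + 1, by omega⟩) = a ⟨2 * (j : ℕ), by omega⟩ := by
          rw [add_comm (a ⟨2 * (j : ℕ), by omega⟩), ← add_assoc, CharTwo.add_self_eq_zero,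
            zero_add]
        rw [← this]; exact e2
      · have : a ⟨2 * (j : ℕ), by omega⟩ + (a ⟨2 * (j : ℕ), by omega⟩
            + a ⟨2 * (j : ℕ) + 1, by omega⟩) = a ⟨2 * (j : ℕ) + 1, by omega⟩ := by
          rw [← add_assoc, CharTwo.add_self_eq_zero, zero_add]
        rw [← this]; exact e1
    intro i
    have hi := i.isLt
    have hj : (i : ℕ) / 2 < s := by omega
    have hcase : (i : ℕ) = 2 * ((i : ℕ) / 2) ∨ (i : ℕ) = 2 * ((i : ℕ) / 2) + 1 := by omega
    obtain ⟨k1, k2⟩ := key ⟨(i : ℕ) / 2, hj⟩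
    rcases hcase with hcase | hcase
    · have : i = ⟨2 * ((i : ℕ) / 2), by omega⟩ := Fin.ext hcase
      rw [this]; exact k1
    · have : i = ⟨2 * ((i : ℕ) / 2) + 1, by omega⟩ := Fin.ext hcase
      rw [this]; exact k2
  have hFx0 : F x = 0 := hd2 x fun i => haz i
  rw [hFx0]
  exact Submodule.zero_mem ⊥
end
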